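/- Let M ∈ ℝ^{l×n×p} be such that M∗M^⊤ is t-invertible. Then ‖bcirc(M^⊤ ∗ (M∗M^⊤)^{-1})‖_F² ≤ l·p·‖(bcirc(M)·bcirc(M)^⊤)^{-1}‖₂, where ‖·‖_F is the matrix Frobenius norm and ‖·‖₂ the spectral norm. (Since bcirc(M) has full row rank, ‖(bcirc(M)bcirc(M)^⊤)^{-1}‖₂ equals σ_{min+}^{-2}(bcirc(M)), the inverse square of the smallest positive singular value of bcirc(M).) -/

import Mathlib

open Matrix
open scoped BigOperators

/-- A real third-order tensor with row index `I`, column index `J`, and `p` frontal slices. -/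
abbrev Tensor (I J : Type*) (p : ℕ) := I → J → Fin p → ℝ

namespace Tensor

variable {I J K : Type*} {p : ℕ}

/-- Block-circulant matricization: `bcirc A [(i,k),(j,l)] = A i j ((k - l) mod p)`. -/
def bcirc (A : Tensor I J p) : Matrix (I × Fin p) (J × Fin p) ℝ :=
  Matrix.of fun ik jl => A ik.1 jl.1 (ik.2 - jl.2)

/-- Unfolding along the second mode: `unfold B [(j,k), i] = B j i k`. -/
def unfold {S : Type*} (B : Tensor J S p) : Matrix (J × Fin p) S ℝ :=
  Matrix.of fun jk s => B jk.1 s jk.2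

/-- The t-product, the unique tensor with `unfold (A ∗ B) = bcirc A * unfold B`. -/
def tprod [Fintype J] (A : Tensor I J p) (B : Tensor J K p) : Tensor I K p :=
  fun i s k => ∑ j : J, ∑ l : Fin p, A i j (k - l) * B j s l

/-- Tensor transpose: `Aᵀ j i k = A i j ((-k) mod p)`. -/
def ttrans (A : Tensor I J p) : Tensor J I p := fun j i k => A i j (-k)

/-- The identity tensor: first frontal slice is the identity, the others are zero. -/
def tid (I : Type*) [DecidableEq I] (p : ℕ) : Tensor I I p :=
  fun i j k => if i = j ∧ (k : ℕ) = 0 then 1 else 0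

/-- t-invertibility of a square tensor. -/
def TInvertible [Fintype I] [DecidableEq I] (S : Tensor I I p) : Prop :=
  ∃ T : Tensor I I p, tprod S T = tid I p ∧ tprod T S = tid I p

open Classical in
/-- The t-inverse of a square tensor (junk value when not t-invertible). -/
noncomputable def tinv [Fintype I] [DecidableEq I] (S : Tensor I I p) : Tensor I I p :=
  if h : TInvertible S then h.choose else 0

/-- The projection tensor `P_M = Mᵀ ∗ (M ∗ Mᵀ)⁻¹ ∗ M`. -/
noncomputable def proj [Fintype I] [DecidableEq I] [Fintype J] (M : Tensor I J p) :
    Tensor J J p :=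
  tprod (ttrans M) (tprod (tinv (tprod M (ttrans M))) M)

/-- The projection tensor `P_{Mᵀ} = M ∗ (Mᵀ ∗ M)⁻¹ ∗ Mᵀ`. -/
noncomputable def projT [Fintype I] [Fintype J] [DecidableEq J] (M : Tensor I J p) :
    Tensor I I p :=
  tprod M (tprod (tinv (tprod (ttrans M) M)) (ttrans M))

/-- The Frobenius inner product of two tensors. -/
def tinner [Fintype I] [Fintype J] (A B : Tensor I J p) : ℝ :=
  ∑ i : I, ∑ j : J, ∑ k : Fin p, A i j k * B i j k

/-- The squared Frobenius norm of a tensor. -/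
def frobSq [Fintype I] [Fintype J] (A : Tensor I J p) : ℝ :=
  ∑ i : I, ∑ j : J, ∑ k : Fin p, (A i j k) ^ 2

/-- The Frobenius norm of a tensor. -/
noncomputable def frobNorm [Fintype I] [Fintype J] (A : Tensor I J p) : ℝ :=
  Real.sqrt (frobSq A)

/-- The subtensor of the row slices of `U` indexed by `μ`. -/
def rowSub (U : Tensor I J p) (μ : Finset I) : Tensor {i // i ∈ μ} J p :=
  fun i => U i.1

/-- The `j`-th lateral slice of `U`, as an `I × 1 × p` tensor. -/
def latSlice (U : Tensor I J p) (j : J) : Tensor I (Fin 1) p :=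
  fun i _ k => U i j k

/-- One (block) Kaczmarz step for the system with operator `U`, sampled row block `μ`,
current iterate `X` and measurement block `Bμ`:
`X ← X - U_μᵀ ∗ (U_μ ∗ U_μᵀ)⁻¹ ∗ (U_μ ∗ X - Bμ)`. -/
noncomputable def kaczStep [DecidableEq I] [Fintype J] (U : Tensor I J p) (μ : Finset I)
    (X : Tensor J K p) (Bμ : Tensor {i // i ∈ μ} K p) : Tensor J K p :=
  X - tprod (ttrans (rowSub U μ))
    (tprod (tinv (tprod (rowSub U μ) (ttrans (rowSub U μ))))
      (tprod (rowSub U μ) X - Bμ))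

/-- One extended (column-like) step:
`W ← W - U_{:j:} ∗ (U_{:j:}ᵀ ∗ U_{:j:})⁻¹ ∗ (U_{:j:}ᵀ ∗ W)`. -/
noncomputable def extStep [Fintype I] (U : Tensor I J p) (j : J) (W : Tensor I K p) :
    Tensor I K p :=
  W - tprod (latSlice U j)
    (tprod (tinv (tprod (ttrans (latSlice U j)) (latSlice U j)))
      (tprod (ttrans (latSlice U j)) W))

end Tensor

/-- Squared Frobenius norm of a real matrix. -/
def matFrobSq {I J : Type*} [Fintype I] [Fintype J] (A : Matrix I J ℝ) : ℝ :=
  ∑ i : I, ∑ j : J, (A i j) ^ 2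

/-- Spectral norm (largest singular value) of a real matrix, as the supremum of `‖A x‖`
over unit vectors `x`. -/
noncomputable def specNorm {I J : Type*} [Fintype I] [Fintype J] (A : Matrix I J ℝ) : ℝ :=
  sSup {r : ℝ | ∃ x : J → ℝ, (∑ j : J, (x j) ^ 2) = 1 ∧
    r = Real.sqrt (∑ i : I, (A.mulVec x i) ^ 2)}

/-- Smallest eigenvalue of a symmetric real matrix, via the Rayleigh quotient:
`σ_min(S) = inf {xᵀ S x : ‖x‖ = 1}`. -/
noncomputable def minEig {I : Type*} [Fintype I] (S : Matrix I I ℝ) : ℝ :=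
  sInf {r : ℝ | ∃ x : I → ℝ, (∑ i : I, (x i) ^ 2) = 1 ∧
    r = ∑ i : I, x i * S.mulVec x i}


namespace Tensor

variable {I' J' K' : Type*} {q : ℕ}

lemma bcirc_tprod [Fintype J'] (A : Tensor I' J' q) (B : Tensor J' K' q) :
    bcirc (tprod A B) = bcirc A * bcirc B := by
  ext ⟨i, k⟩ ⟨s, m⟩
  haveI : NeZero q := ⟨fun hq => (hq ▸ k).elim0⟩
  simp only [bcirc, tprod, Matrix.mul_apply, Matrix.of_apply, Fintype.sum_prod_type]
  refine Finset.sum_congr rfl fun j _ => ?_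
  refine Fintype.sum_equiv (Equiv.addRight m) _ _ fun x => ?_
  simp [sub_sub, add_comm m x]

lemma bcirc_ttrans (A : Tensor I' J' q) : bcirc (ttrans A) = (bcirc A)ᵀ := by
  ext ⟨j, kl⟩ ⟨i, k⟩
  haveI : NeZero q := ⟨fun hq => (hq ▸ k).elim0⟩
  simp [bcirc, ttrans, neg_sub]

lemma bcirc_tid [DecidableEq I'] :
    bcirc (tid I' q) = (1 : Matrix (I' × Fin q) (I' × Fin q) ℝ) := by
  ext ⟨i, k⟩ ⟨j, m⟩
  haveI : NeZero q := ⟨fun hq => (hq ▸ k).elim0⟩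
  have hv : ((k - m : Fin q) : ℕ) = 0 ↔ k = m := by
    rw [show (0:ℕ) = ((0 : Fin q) : ℕ) from (Fin.val_zero q).symm, Fin.val_eq_val, sub_eq_zero]
  simp [bcirc, tid, Matrix.one_apply, hv, Prod.ext_iff, sub_eq_zero]

end Tensor

lemma specNorm_bddAbove {I J : Type*} [Fintype I] [Fintype J] (A : Matrix I J ℝ) :
    BddAbove {r : ℝ | ∃ x : J → ℝ, (∑ j : J, (x j) ^ 2) = 1 ∧
      r = Real.sqrt (∑ i : I, (A.mulVec x i) ^ 2)} := by
  refine ⟨Real.sqrt (matFrobSq A), fun r ⟨x, hx, hr⟩ => ?_⟩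
  subst hr
  apply Real.sqrt_le_sqrt
  have : ∀ i : I, (A.mulVec x i) ^ 2 ≤ ∑ j : J, (A i j) ^ 2 := by
    intro i
    have := Finset.sum_mul_sq_le_sq_mul_sq Finset.univ (fun j => A i j) x
    simpa [Matrix.mulVec, dotProduct, hx] using this
  calc ∑ i : I, (A.mulVec x i) ^ 2 ≤ ∑ i : I, ∑ j : J, (A i j) ^ 2 :=
        Finset.sum_le_sum fun i _ => this i
    _ = matFrobSq A := rfl

lemma diag_le_specNorm {I : Type*} [Fintype I] [DecidableEq I] (A : Matrix I I ℝ) (c : I) :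
    A c c ≤ specNorm A := by
  set e : I → ℝ := fun j => if j = c then 1 else 0 with he
  have hx : (∑ j : I, (e j) ^ 2) = 1 := by
    simp [he, ite_pow, Finset.sum_ite_eq']
  have hmem : Real.sqrt (∑ i : I, (A.mulVec e i) ^ 2) ∈
      {r : ℝ | ∃ x : I → ℝ, (∑ j : I, (x j) ^ 2) = 1 ∧
        r = Real.sqrt (∑ i : I, (A.mulVec x i) ^ 2)} := ⟨_, hx, rfl⟩
  have hle := le_csSup (specNorm_bddAbove A) hmem
  refine le_trans ?_ hle
  have h1 : A c c ≤ Real.sqrt ((A c c) ^ 2) := by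
    rw [Real.sqrt_sq_eq_abs]; exact le_abs_self _
  refine h1.trans (Real.sqrt_le_sqrt ?_)
  have hmv : ∀ i, A.mulVec e i = A i c := by
    intro i
    simp [he, Matrix.mulVec, dotProduct, mul_ite, Finset.sum_ite_eq']
  have : (A c c) ^ 2 ≤ ∑ i : I, (A.mulVec e i) ^ 2 := by
    simp only [hmv]
    exact Finset.single_le_sum (fun i _ => sq_nonneg (A i c)) (Finset.mem_univ c)
  exact this


open Tensor in
/-- `‖bcirc(Mᵀ ∗ (M∗Mᵀ)⁻¹)‖_F² ≤ l⬝p⬝‖(bcirc(M) bcirc(M)ᵀ)⁻¹‖₂`. -/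
theorem stmt4 {l n p : ℕ} (M : Tensor (Fin l) (Fin n) p)
    (h : TInvertible (tprod M (ttrans M))) :
    matFrobSq (bcirc (tprod (ttrans M) (tinv (tprod M (ttrans M))))) ≤
      (l : ℝ) * p * specNorm ((bcirc M * (bcirc M)ᵀ)⁻¹) := by
  classical
  set S := tprod M (ttrans M) with hS
  have hspec : tprod S (tinv S) = tid (Fin l) p ∧ tprod (tinv S) S = tid (Fin l) p := by
    rw [tinv, dif_pos h]; exact h.choose_spec
  set A := bcirc M with hA
  set H := bcirc (tinv S) with hH
  have hGH : (A * Aᵀ) * H = 1 := by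
    have := congrArg bcirc hspec.1
    rwa [bcirc_tprod, bcirc_tprod, bcirc_ttrans, bcirc_tid] at this
  have hinv : (A * Aᵀ)⁻¹ = H := Matrix.inv_eq_right_inv hGH
  have hB : bcirc (tprod (ttrans M) (tinv S)) = Aᵀ * H := by
    rw [bcirc_tprod, bcirc_ttrans]
  set B := Aᵀ * H with hBdef
  have hBtB : Bᵀ * B = Hᵀ := by
    have : Bᵀ * B = Hᵀ * ((A * Aᵀ) * H) := by
      rw [hBdef, Matrix.transpose_mul, Matrix.transpose_transpose]
      simp only [Matrix.mul_assoc]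
    rw [this, hGH, Matrix.mul_one]
  have key : matFrobSq B = ∑ c : Fin l × Fin p, H c c := by
    rw [matFrobSq, Finset.sum_comm]
    refine Finset.sum_congr rfl fun c _ => ?_
    have : (Bᵀ * B) c c = ∑ r : Fin n × Fin p, (B r c) ^ 2 := by
      simp [Matrix.mul_apply, sq]
    rw [← this, hBtB, Matrix.transpose_apply]
  rw [hB, key, hinv]
  calc ∑ c : Fin l × Fin p, H c c ≤ ∑ _c : Fin l × Fin p, specNorm H :=
        Finset.sum_le_sum fun c _ => diag_le_specNorm H c
    _ = (l : ℝ) * p * specNorm H := by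
        simp [Finset.sum_const, mul_assoc]
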